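/- Suppose p_n, c_n ∈ (0,1) for n ∈ ℕ, with p_n → 0 and p_n/c_n → β ∈ (0,∞) as n → ∞. Let π^{(n)} denote the stationary distribution of the random walk with binomial catastrophes with parameters (p_n, c_n). Then π^{(n)} converges weakly to the Poisson distribution with mean β as n → ∞. -/

import Mathlib

open scoped BigOperators
open Filter

noncomputable section

/-- Probability mass function of a Binomial(n, ε) random variable, evaluated at k. -/
def binomPMF (n : ℕ) (ε : ℝ) (k : ℕ) : ℝ :=
  if k ≤ n then (n.choose k : ℝ) * ε ^ k * (1 - ε) ^ (n - k) else 0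

/-- Transition function `p^{p,c}` of the random walk with binomial catastrophes:
`p^{p,c}(i, i+1) = p` and `p^{p,c}(i, j) = (1-p) C(i,j) (1-c)^j c^(i-j)` for `j ≤ i`. -/
def stepFn (p c : ℝ) (i j : ℕ) : ℝ :=
  (if j = i + 1 then p else 0) + (if j ≤ i then (1 - p) * binomPMF i (1 - c) j else 0)

/-- `law p c x t j = P_x(X_t = j)`, the time-`t` distribution of the chain started at `x`. -/
def law (p c : ℝ) (x : ℕ) : ℕ → ℕ → ℝ
  | 0, j => if j = x then 1 else 0
  | t + 1, j => ∑' i, law p c x t i * stepFn p c i j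

/-- Mass that a probability mass function assigns to a set `A ⊆ ℕ`. -/
def massOf (q : ℕ → ℝ) (A : Set ℕ) : ℝ := ∑' j, A.indicator q j

/-- Total variation distance between two distributions on ℕ (given by their pmfs):
the maximum over subsets `A ⊆ ℕ` of `|Q₁(A) - Q₂(A)|`. -/
def tvDist (q₁ q₂ : ℕ → ℝ) : ℝ := ⨆ A : Set ℕ, |massOf q₁ A - massOf q₂ A|

set_option maxHeartbeats 1000000

namespace BinCatAux

lemma binomPMF_pgf (n : ℕ) (ε s : ℝ) :
    ∑ k ∈ Finset.range (n+1), binomPMF n ε k * s ^ k = (ε * s + (1 - ε)) ^ n := by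
  rw [add_pow]
  refine Finset.sum_congr rfl ?_
  intro k hk
  rw [Finset.mem_range, Nat.lt_succ_iff] at hk
  simp only [binomPMF, if_pos hk, mul_pow]
  ring

lemma binomPMF_nonneg {n : ℕ} {ε : ℝ} (h0 : 0 ≤ ε) (h1 : ε ≤ 1) (k : ℕ) :
    0 ≤ binomPMF n ε k := by
  unfold binomPMF
  split
  · exact mul_nonneg (mul_nonneg (by positivity) (pow_nonneg h0 _)) (pow_nonneg (by linarith) _)
  · exact le_rfl

lemma binomPMF_le_one {n : ℕ} {ε : ℝ} (h0 : 0 ≤ ε) (h1 : ε ≤ 1) (k : ℕ) :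
    binomPMF n ε k ≤ 1 := by
  have hsum := binomPMF_pgf n ε 1
  simp only [mul_one, one_pow] at hsum
  by_cases hk : k ≤ n
  · calc binomPMF n ε k ≤ ∑ j ∈ Finset.range (n+1), binomPMF n ε j := by
          refine Finset.single_le_sum (fun j _ => binomPMF_nonneg h0 h1 j) ?_
          simpa [Finset.mem_range, Nat.lt_succ_iff] using hk
      _ = 1 := by
          rw [hsum]
          have : ε + (1 - ε) = 1 := by ring
          rw [this, one_pow]
  · simp [binomPMF, hk]


lemma stepFn_nonneg {p c : ℝ} (hp : p ∈ Set.Ioo (0:ℝ) 1) (hc : c ∈ Set.Ioo (0:ℝ) 1)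
    (i j : ℕ) : 0 ≤ stepFn p c i j := by
  obtain ⟨hp0, hp1⟩ := hp; obtain ⟨hc0, hc1⟩ := hc
  unfold stepFn
  have hb := binomPMF_nonneg (n := i) (ε := 1 - c) (by linarith) (by linarith) j
  apply add_nonneg <;> split <;> first | linarith | nlinarith | exact le_rfl

lemma stepFn_le_one {p c : ℝ} (hp : p ∈ Set.Ioo (0:ℝ) 1) (hc : c ∈ Set.Ioo (0:ℝ) 1)
    (i j : ℕ) : stepFn p c i j ≤ 1 := by
  obtain ⟨hp0, hp1⟩ := hp; obtain ⟨hc0, hc1⟩ := hc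
  unfold stepFn
  have hb0 := binomPMF_nonneg (n := i) (ε := 1 - c) (by linarith) (by linarith) j
  have hb1 := binomPMF_le_one (n := i) (ε := 1 - c) (by linarith) (by linarith) j
  by_cases h1 : j = i + 1
  · have h2 : ¬ j ≤ i := by omega
    simp only [if_pos h1, if_neg h2]
    linarith
  · simp only [if_neg h1]
    split
    · nlinarith
    · norm_num

lemma stepFn_pgf {p c : ℝ} (i : ℕ) (s : ℝ) :
    ∑' j, stepFn p c i j * s ^ j
      = p * s ^ (i+1) + (1 - p) * ((1-c) * s + c) ^ i := by
  have hz : ∀ j ∉ Finset.range (i+2), stepFn p c i j * s ^ j = 0 := by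
    intro j hj
    rw [Finset.mem_range, not_lt] at hj
    have h1 : j ≠ i + 1 := by omega
    have h2 : ¬ j ≤ i := by omega
    simp [stepFn, h1, h2]
  rw [tsum_eq_sum hz]
  simp only [stepFn, add_mul]
  rw [Finset.sum_add_distrib]
  congr 1
  · rw [Finset.sum_eq_single (i+1)]
    · simp
    · intro j _ hj; simp [hj]
    · intro h; exact absurd (Finset.self_mem_range_succ (i+1)) h
  · rw [Finset.sum_range_succ]
    have h2 : ¬ (i + 1 ≤ i) := by omega
    rw [if_neg h2]
    have h3 : ∀ j ∈ Finset.range (i+1),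
        (if j ≤ i then (1 - p) * binomPMF i (1 - c) j else 0) * s ^ j
          = (1 - p) * (binomPMF i (1 - c) j * s ^ j) := by
      intro j hj
      rw [Finset.mem_range, Nat.lt_succ_iff] at hj
      rw [if_pos hj]; ring
    rw [Finset.sum_congr rfl h3, ← Finset.mul_sum, binomPMF_pgf]
    have : (1 : ℝ) - (1 - c) = c := by ring
    rw [this]
    simp

lemma summable_of_tsum_one {π : ℕ → ℝ} (h : ∑' k, π k = 1) : Summable π := by
  by_contra hs
  rw [tsum_eq_zero_of_not_summable hs] at h
  norm_num at h

lemma summable_pgf {π : ℕ → ℝ} (hπ0 : ∀ k, 0 ≤ π k) (hs : Summable π)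
    {s : ℝ} (h0 : 0 ≤ s) (h1 : s ≤ 1) : Summable fun k => π k * s ^ k :=
  Summable.of_nonneg_of_le (fun k => mul_nonneg (hπ0 k) (pow_nonneg h0 k))
    (fun k => mul_le_of_le_one_right (hπ0 k) (pow_le_one₀ h0 h1)) hs

lemma pgf_pos {π : ℕ → ℝ} (hπ0 : ∀ k, 0 ≤ π k) (hπ1 : ∑' k, π k = 1)
    {s : ℝ} (h0 : 0 < s) (h1 : s ≤ 1) : 0 < ∑' k, π k * s ^ k := by
  have hsum := summable_of_tsum_one hπ1
  obtain ⟨k, hk⟩ : ∃ k, 0 < π k := by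
    by_contra h
    push_neg at h
    have hz : π = fun _ => 0 := funext fun k => le_antisymm (h k) (hπ0 k)
    rw [hz] at hπ1
    simp at hπ1
  have hterm : 0 < π k * s ^ k := mul_pos hk (pow_pos h0 k)
  calc (0:ℝ) < π k * s ^ k := hterm
    _ ≤ ∑' k, π k * s ^ k := by
        refine Summable.le_tsum (summable_pgf hπ0 hsum h0.le h1) k ?_
        intro j _
        exact mul_nonneg (hπ0 j) (pow_nonneg h0.le j)

lemma pgf_le_one {π : ℕ → ℝ} (hπ0 : ∀ k, 0 ≤ π k) (hπ1 : ∑' k, π k = 1)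
    {s : ℝ} (h0 : 0 ≤ s) (h1 : s ≤ 1) : ∑' k, π k * s ^ k ≤ 1 := by
  have hsum := summable_of_tsum_one hπ1
  calc ∑' k, π k * s ^ k ≤ ∑' k, π k := by
        refine Summable.tsum_le_tsum (fun k => ?_) (summable_pgf hπ0 hsum h0 h1) hsum
        exact mul_le_of_le_one_right (hπ0 k) (pow_le_one₀ h0 h1)
    _ = 1 := hπ1

lemma funEq {p c : ℝ} (hp : p ∈ Set.Ioo (0:ℝ) 1) (hc : c ∈ Set.Ioo (0:ℝ) 1)
    {π : ℕ → ℝ} (hπ0 : ∀ k, 0 ≤ π k) (hπ1 : ∑' k, π k = 1)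
    (hπs : ∀ j, ∑' i, π i * stepFn p c i j = π j)
    {s : ℝ} (hs0 : 0 ≤ s) (hs1 : s ≤ 1) :
    ∑' k, π k * s ^ k
      = p * s * ∑' k, π k * s ^ k
        + (1 - p) * ∑' k, π k * ((1-c) * s + c) ^ k := by
  obtain ⟨hp0, hp1⟩ := hp; obtain ⟨hc0, hc1⟩ := hc
  have hsum := summable_of_tsum_one hπ1
  set t : ℝ := (1-c) * s + c with ht
  have ht0 : 0 ≤ t := by nlinarith
  have ht1 : t ≤ 1 := by nlinarith
  set F : ℕ → ℕ → ℝ := fun i j => π i * (stepFn p c i j * s ^ j) with hF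
  have hFnn : ∀ i j, 0 ≤ F i j := fun i j =>
    mul_nonneg (hπ0 i) (mul_nonneg (stepFn_nonneg ⟨hp0,hp1⟩ ⟨hc0,hc1⟩ i j) (pow_nonneg hs0 j))
  have hrow : ∀ i, Summable (F i) := by
    intro i
    apply summable_of_ne_finset_zero (s := Finset.range (i+2))
    intro j hj
    rw [Finset.mem_range, not_lt] at hj
    have h1 : j ≠ i + 1 := by omega
    have h2 : ¬ j ≤ i := by omega
    simp [hF, stepFn, h1, h2]
  have hrowsum : ∀ i, ∑' j, F i j = π i * (p * s ^ (i+1) + (1 - p) * t ^ i) := by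
    intro i
    rw [hF]
    rw [tsum_mul_left, stepFn_pgf]
  have hrowbdd : ∀ i, ∑' j, F i j ≤ π i := by
    intro i
    rw [hrowsum i]
    have h1 : p * s ^ (i+1) + (1 - p) * t ^ i ≤ 1 := by
      have := pow_le_one₀ hs0 hs1 (n := i+1)
      have := pow_le_one₀ ht0 ht1 (n := i)
      have := pow_nonneg hs0 (i+1)
      have := pow_nonneg ht0 i
      nlinarith
    have h2 : 0 ≤ p * s ^ (i+1) + (1 - p) * t ^ i := by
      have := pow_nonneg hs0 (i+1)
      have := pow_nonneg ht0 i
      nlinarith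
    exact mul_le_of_le_one_right (hπ0 i) h1
  have hrowsummable : Summable (fun i => ∑' j, F i j) :=
    Summable.of_nonneg_of_le (fun i => tsum_nonneg (fun j => hFnn i j)) hrowbdd hsum
  have hFsum : Summable (Function.uncurry F) := by
    exact (summable_prod_of_nonneg (fun q => hFnn q.1 q.2)).mpr ⟨hrow, hrowsummable⟩
  have hcol : ∀ j, Summable (fun i => F i j) := by
    intro j
    refine Summable.of_nonneg_of_le (fun i => hFnn i j) (fun i => ?_) hsum
    have h1 : stepFn p c i j * s ^ j ≤ 1 :=
      mul_le_one₀ (stepFn_le_one ⟨hp0,hp1⟩ ⟨hc0,hc1⟩ i j) (pow_nonneg hs0 j) (pow_le_one₀ hs0 hs1)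
    exact mul_le_of_le_one_right (hπ0 i) h1
  calc ∑' k, π k * s ^ k
      = ∑' j, (∑' i, π i * stepFn p c i j) * s ^ j := by
        exact tsum_congr fun j => by rw [hπs j]
    _ = ∑' j, ∑' i, F i j := by
        refine tsum_congr fun j => ?_
        rw [← tsum_mul_right]
        exact tsum_congr fun i => by rw [hF]; ring
    _ = ∑' i, ∑' j, F i j := Summable.tsum_comm' hFsum hrow hcol
    _ = ∑' i, (p * s * (π i * s ^ i) + (1 - p) * (π i * t ^ i)) := by
        refine tsum_congr fun i => ?_
        rw [hrowsum i, pow_succ]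
        ring
    _ = p * s * ∑' k, π k * s ^ k + (1 - p) * ∑' k, π k * t ^ k := by
        rw [Summable.tsum_add (((summable_pgf hπ0 hsum hs0 hs1).mul_left _))
          (((summable_pgf hπ0 hsum ht0 ht1).mul_left _)), tsum_mul_left, tsum_mul_left]

lemma funEq' {p c : ℝ} (hp : p ∈ Set.Ioo (0:ℝ) 1) (hc : c ∈ Set.Ioo (0:ℝ) 1)
    {π : ℕ → ℝ} (hπ0 : ∀ k, 0 ≤ π k) (hπ1 : ∑' k, π k = 1)
    (hπs : ∀ j, ∑' i, π i * stepFn p c i j = π j)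
    {s : ℝ} (hs0 : 0 ≤ s) (hs1 : s ≤ 1) :
    (∑' k, π k * s ^ k) * (1 - p * s)
      = (1 - p) * ∑' k, π k * ((1-c) * s + c) ^ k := by
  have h := funEq hp hc hπ0 hπ1 hπs hs0 hs1
  linear_combination h

lemma pgf_prod {p c : ℝ} (hp : p ∈ Set.Ioo (0:ℝ) 1) (hc : c ∈ Set.Ioo (0:ℝ) 1)
    {π : ℕ → ℝ} (hπ0 : ∀ k, 0 ≤ π k) (hπ1 : ∑' k, π k = 1)
    (hπs : ∀ j, ∑' i, π i * stepFn p c i j = π j)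
    {s : ℝ} (hs0 : 0 ≤ s) (hs1 : s ≤ 1) (m : ℕ) :
    (∑' k, π k * s ^ k) * ∏ j ∈ Finset.range m, (1 - p * (1 - (1-c)^j * (1-s)))
      = (1-p)^m * ∑' k, π k * (1 - (1-c)^m * (1-s)) ^ k := by
  induction m with
  | zero =>
    have h : (1 : ℝ) - (1-c)^0 * (1-s) = s := by ring
    rw [h]
    simp
  | succ m ih =>
    obtain ⟨hc0, hc1⟩ := hc
    rw [Finset.prod_range_succ, ← mul_assoc, ih]
    set t : ℝ := 1 - (1-c)^m * (1-s) with htdef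
    have hcm0 : 0 ≤ (1-c)^m := pow_nonneg (by linarith) m
    have hcm1 : (1-c)^m ≤ 1 := pow_le_one₀ (by linarith) (by linarith)
    have ht0 : 0 ≤ t := by nlinarith
    have ht1 : t ≤ 1 := by nlinarith
    have hfe := funEq' hp ⟨hc0, hc1⟩ hπ0 hπ1 hπs ht0 ht1
    have harg : (1-c) * t + c = 1 - (1-c)^(m+1) * (1-s) := by
      rw [htdef, pow_succ]; ring
    rw [harg] at hfe
    rw [pow_succ]
    linear_combination ((1-p)^m) * hfe

lemma log_one_add_le {x : ℝ} (hx : 0 ≤ x) : Real.log (1+x) ≤ x := by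
  have := Real.log_le_sub_one_of_pos (x := 1+x) (by linarith)
  linarith

lemma le_log_one_add {x : ℝ} (hx : 0 ≤ x) : x - x^2 ≤ Real.log (1+x) := by
  have h1 : (0:ℝ) < 1 + x := by linarith
  have h2 := Real.log_le_sub_one_of_pos (x := (1+x)⁻¹) (by positivity)
  rw [Real.log_inv] at h2
  have h4 : x - x^2 ≤ x/(1+x) := by
    rw [le_div_iff₀ h1]; nlinarith
  have h5 : (1+x)⁻¹ - 1 = -(x/(1+x)) := by field_simp; ring
  linarith [h2, h4, h5.le, h5.ge]

lemma neg_log_pgf_bounds {p c : ℝ} (hp : p ∈ Set.Ioo (0:ℝ) 1) (hc : c ∈ Set.Ioo (0:ℝ) 1)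
    {π : ℕ → ℝ} (hπ0 : ∀ k, 0 ≤ π k) (hπ1 : ∑' k, π k = 1)
    (hπs : ∀ j, ∑' i, π i * stepFn p c i j = π j)
    {s : ℝ} (hs0 : 0 < s) (hs1 : s < 1) :
    p*(1-s)/((1-p)*c) - (p*(1-s)/(1-p))^2 / (1 - (1-c)^2)
        ≤ -Real.log (∑' k, π k * s ^ k)
    ∧ -Real.log (∑' k, π k * s ^ k) ≤ p*(1-s)/((1-p)*c) := by
  obtain ⟨hp0, hp1⟩ := hp; obtain ⟨hc0, hc1⟩ := hc
  have hsum := summable_of_tsum_one hπ1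
  set a : ℝ := p*(1-s)/(1-p) with ha
  have ha0 : 0 < a := by
    apply div_pos (by nlinarith) (by linarith)
  set x : ℕ → ℝ := fun j => a * (1-c)^j with hx
  have hx0 : ∀ j, 0 ≤ x j := fun j => mul_nonneg ha0.le (pow_nonneg (by linarith) j)
  set G : ℝ := ∑' k, π k * s ^ k with hG
  have hGpos : 0 < G := pgf_pos hπ0 hπ1 hs0 hs1.le
  set t : ℕ → ℝ := fun m => 1 - (1-c)^m * (1-s) with htdef
  have htm : ∀ m, s ≤ t m ∧ t m ≤ 1 := by
    intro m
    have h1 : 0 ≤ (1-c)^m := pow_nonneg (by linarith) m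
    have h2 : (1-c)^m ≤ 1 := pow_le_one₀ (by linarith) (by linarith)
    constructor
    · show s ≤ 1 - (1-c)^m * (1-s)
      nlinarith
    · show 1 - (1-c)^m * (1-s) ≤ 1
      nlinarith
  have hGt : ∀ m, 0 < ∑' k, π k * (t m) ^ k := fun m =>
    pgf_pos hπ0 hπ1 (lt_of_lt_of_le hs0 (htm m).1) (htm m).2
  -- product identity
  have hfact : ∀ j, 1 - p * (t j) = (1-p) * (1 + x j) := by
    intro j
    have hpne' : ((1:ℝ)-p) ≠ 0 := by linarith
    have key : (1-p) * a = p*(1-s) := by rw [ha, mul_comm]; exact div_mul_cancel₀ _ hpne'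
    show 1 - p * (1 - (1-c)^j * (1-s)) = (1-p) * (1 + a * (1-c)^j)
    have h2 : (1-p) * (1 + a * (1-c)^j) = (1-p) + ((1-p)*a) * (1-c)^j := by ring
    rw [h2, key]
    ring
  have hpne : ((1:ℝ)-p) ≠ 0 := by linarith
  have hprod : ∀ m, ∏ j ∈ Finset.range m, (1 + x j) = (∑' k, π k * (t m) ^ k) / G := by
    intro m
    have h0 := pgf_prod ⟨hp0,hp1⟩ ⟨hc0,hc1⟩ hπ0 hπ1 hπs hs0.le hs1.le m
    have h1 : ∏ j ∈ Finset.range m, (1 - p * (1 - (1-c)^j * (1-s)))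
        = (1-p)^m * ∏ j ∈ Finset.range m, (1 + x j) := by
      calc ∏ j ∈ Finset.range m, (1 - p * (1 - (1-c)^j * (1-s)))
          = ∏ j ∈ Finset.range m, ((1-p) * (1 + x j)) :=
            Finset.prod_congr rfl (fun j _ => hfact j)
        _ = (∏ _j ∈ Finset.range m, (1-p)) * ∏ j ∈ Finset.range m, (1 + x j) :=
            Finset.prod_mul_distrib
        _ = (1-p)^m * ∏ j ∈ Finset.range m, (1 + x j) := by
            rw [Finset.prod_const, Finset.card_range]
    have h3 : (1-p)^m * (G * ∏ j ∈ Finset.range m, (1 + x j))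
        = (1-p)^m * ∑' k, π k * (t m) ^ k := by
      linear_combination h0 - G * h1
    have h4 := mul_left_cancel₀ (pow_ne_zero m hpne) h3
    rw [eq_div_iff hGpos.ne']
    linear_combination h4
  have hxpos : ∀ j, (0:ℝ) < 1 + x j := fun j => by have := hx0 j; linarith
  have hlog : ∀ m, ∑ j ∈ Finset.range m, Real.log (1 + x j)
      = Real.log (∑' k, π k * (t m) ^ k) - Real.log G := by
    intro m
    rw [← Real.log_prod (s := Finset.range m) (f := fun j => 1 + x j) (fun j _ => (hxpos j).ne'), hprod m,
      Real.log_div (hGt m).ne' hGpos.ne']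
  -- limit of the tails
  have hc' : Tendsto (fun m => (1-c)^m) atTop (nhds 0) :=
    tendsto_pow_atTop_nhds_zero_of_lt_one (by linarith) (by linarith)
  have htlim : Tendsto t atTop (nhds 1) := by
    have h := (hc'.mul_const (1-s)).const_sub 1
    simpa [htdef] using h
  have hGtlim : Tendsto (fun m => ∑' k, π k * (t m) ^ k) atTop (nhds 1) := by
    have h := tendsto_tsum_of_dominated_convergence (𝓕 := atTop)
      (f := fun m k => π k * (t m) ^ k) (g := π) (bound := π) hsum ?_ ?_
    · rwa [hπ1] at h
    · intro k
      have := (htlim.pow k).const_mul (π k)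
      simpa using this
    · refine Eventually.of_forall fun m => fun k => ?_
      have ht0' : 0 ≤ t m := le_trans hs0.le (htm m).1
      rw [Real.norm_eq_abs, abs_of_nonneg (mul_nonneg (hπ0 k) (pow_nonneg ht0' k))]
      exact mul_le_of_le_one_right (hπ0 k) (pow_le_one₀ ht0' (htm m).2)
  have hloglim : Tendsto (fun m => ∑ j ∈ Finset.range m, Real.log (1 + x j)) atTop
      (nhds (-Real.log G)) := by
    have h := ((Real.continuousAt_log one_ne_zero).tendsto.comp hGtlim).sub_const (Real.log G)
    have h2 : Real.log 1 - Real.log G = -Real.log G := by simp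
    rw [h2] at h
    exact Tendsto.congr (fun m => (hlog m).symm) h
  -- geometric sums
  have hr0 : (0:ℝ) ≤ 1 - c := by linarith
  have hr1 : 1 - c < 1 := by linarith
  have hgeo : HasSum (fun j => (1-c)^j) (1 - (1-c))⁻¹ := hasSum_geometric_of_lt_one hr0 hr1
  have hAhs : HasSum x (a * (1 - (1-c))⁻¹) := by
    have := hgeo.mul_left a
    exact this
  have hAval : a * (1 - (1-c))⁻¹ = p*(1-s)/((1-p)*c) := by
    rw [ha]
    field_simp
    rw [sub_sub_cancel, mul_div_assoc, div_self hc0.ne', mul_one]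
  have hr20 : (0:ℝ) ≤ (1-c)^2 := by positivity
  have hr21 : (1-c)^2 < 1 := by nlinarith
  have hgeo2 : HasSum (fun j => ((1-c)^2)^j) (1 - (1-c)^2)⁻¹ :=
    hasSum_geometric_of_lt_one hr20 hr21
  have hx2 : ∀ j, x j ^ 2 = a^2 * ((1-c)^2)^j := by
    intro j
    show (a * (1-c)^j)^2 = a^2 * ((1-c)^2)^j
    rw [mul_pow, ← pow_mul, mul_comm j 2, pow_mul]
  have hBhs : HasSum (fun j => x j ^ 2) (a^2 * (1 - (1-c)^2)⁻¹) := by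
    have h := hgeo2.mul_left (a^2)
    have he : (fun j => x j ^ 2) = fun j => a^2 * ((1-c)^2)^j := funext hx2
    rw [he]
    exact h
  constructor
  · -- lower bound
    have hlow := (hAhs.sub hBhs).tendsto_sum_nat
    have hle := le_of_tendsto_of_tendsto' hlow hloglim
      (fun m => Finset.sum_le_sum fun j _ => le_log_one_add (hx0 j))
    rw [hAval] at hle
    calc p*(1-s)/((1-p)*c) - (p*(1-s)/(1-p))^2 / (1 - (1-c)^2)
        = p*(1-s)/((1-p)*c) - a^2 * (1 - (1-c)^2)⁻¹ := by rw [ha]; ring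
      _ ≤ -Real.log G := hle
  · -- upper bound
    refine le_of_tendsto hloglim (Eventually.of_forall fun m => ?_)
    calc ∑ j ∈ Finset.range m, Real.log (1 + x j)
        ≤ ∑ j ∈ Finset.range m, x j :=
          Finset.sum_le_sum fun j _ => log_one_add_le (hx0 j)
      _ ≤ ∑' j, x j := Summable.sum_le_tsum (Finset.range m) (fun j _ => hx0 j) hAhs.summable
      _ = p*(1-s)/((1-p)*c) := by rw [hAhs.tsum_eq, hAval]

/-- the Poisson pmf -/
def poissonPMF (β : ℝ) (k : ℕ) : ℝ := Real.exp (-β) * β ^ k / (Nat.factorial k : ℝ)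

lemma exp_hasSum (x : ℝ) : HasSum (fun k => x ^ k / (Nat.factorial k : ℝ)) (Real.exp x) := by
  have h1 : Summable (fun k => x ^ k / (Nat.factorial k : ℝ)) := Real.summable_pow_div_factorial x
  have h2 := h1.hasSum
  have h3 : ∑' n : ℕ, x ^ n / (Nat.factorial n : ℝ) = Real.exp x := by
    rw [Real.exp_eq_exp_ℝ, NormedSpace.exp_eq_tsum_div]
  rwa [h3] at h2

lemma poisson_pgf_hasSum (β : ℝ) (s : ℝ) :
    HasSum (fun k => poissonPMF β k * s ^ k) (Real.exp (-(β * (1 - s)))) := by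
  have h1 := (exp_hasSum (β * s)).mul_left (Real.exp (-β))
  have he : (fun k => Real.exp (-β) * ((β*s) ^ k / (Nat.factorial k : ℝ)))
      = fun k => poissonPMF β k * s ^ k := by
    funext k
    rw [poissonPMF, mul_pow]
    ring
  rw [he] at h1
  have hv : Real.exp (-β) * Real.exp (β*s) = Real.exp (-(β * (1 - s))) := by
    rw [← Real.exp_add]
    congr 1
    ring
  rwa [hv] at h1

lemma poissonPMF_nonneg {β : ℝ} (hβ : 0 < β) (k : ℕ) : 0 ≤ poissonPMF β k := by
  rw [poissonPMF]; positivity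

lemma poisson_hasSum_one (β : ℝ) : HasSum (poissonPMF β) 1 := by
  have h := poisson_pgf_hasSum β 1
  simp only [one_pow, mul_one, sub_self, mul_zero, neg_zero, Real.exp_zero] at h
  exact h


end BinCatAux

open BinCatAux

/-- **Theorem 4.2.** Suppose `p_n, c_n ∈ (0,1)` with `p_n → 0` and `p_n/c_n → β ∈ (0,∞)`.
Then the stationary distributions `π^{(n)}` converge weakly (equivalently, pointwise on ℕ)
to the Poisson distribution with mean `β`. -/
theorem stationary_poisson_limit
    (p c : ℕ → ℝ) (hp : ∀ n, p n ∈ Set.Ioo (0 : ℝ) 1) (hc : ∀ n, c n ∈ Set.Ioo (0 : ℝ) 1)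
    (hp0 : Tendsto p atTop (nhds 0))
    (β : ℝ) (hβ : 0 < β) (hratio : Tendsto (fun n => p n / c n) atTop (nhds β))
    (piD : ℕ → ℕ → ℝ) (hpi0 : ∀ n k, 0 ≤ piD n k) (hpi1 : ∀ n, ∑' k, piD n k = 1)
    (hpis : ∀ n j, ∑' i, piD n i * stepFn (p n) (c n) i j = piD n j) :
    ∀ k : ℕ,
      Tendsto (fun n => piD n k) atTop
        (nhds (Real.exp (-β) * β ^ k / (Nat.factorial k : ℝ))) := by
  -- c tends to 0
  have hc0 : Tendsto c atTop (nhds 0) := by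
    have h1 := hp0.mul (hratio.inv₀ hβ.ne')
    have h2 : ∀ n, p n * (p n / c n)⁻¹ = c n := by
      intro n
      obtain ⟨hp1, _⟩ := hp n
      obtain ⟨hc1, _⟩ := hc n
      field_simp
    have h3 := Tendsto.congr h2 h1
    simpa using h3
  -- pgf limit
  have hGlim : ∀ s : ℝ, 0 < s → s < 1 →
      Tendsto (fun n => ∑' k, piD n k * s ^ k) atTop (nhds (Real.exp (-(β * (1 - s))))) := by
    intro s hs0 hs1
    have hb := fun n => neg_log_pgf_bounds (hp n) (hc n) (hpi0 n) (hpi1 n) (hpis n) hs0 hs1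
    -- limit of upper bound
    have hA : Tendsto (fun n => p n * (1-s)/((1-p n)*(c n))) atTop (nhds (β * (1-s))) := by
      have hrw : ∀ n, p n * (1-s)/((1-p n)*(c n)) = (p n / c n) * ((1-s)/(1-p n)) := by
        intro n
        obtain ⟨h1, h2⟩ := hp n
        obtain ⟨h3, h4⟩ := hc n
        rw [div_mul_div_comm, mul_comm (c n) (1 - p n)]
      have h5 : Tendsto (fun n => (1-s)/(1-p n)) atTop (nhds ((1-s)/(1-0))) :=
        tendsto_const_nhds.div (tendsto_const_nhds.sub hp0) (by norm_num)
      have h6 := hratio.mul h5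
      have h7 := Tendsto.congr (fun n => (hrw n).symm) h6
      have h8 : β * ((1-s)/(1-0)) = β * (1-s) := by norm_num
      rwa [h8] at h7
    -- limit of correction term
    have hB : Tendsto (fun n => (p n * (1-s)/(1-p n))^2 / (1 - (1-c n)^2)) atTop (nhds 0) := by
      have hrw : ∀ n, (p n * (1-s)/(1-p n))^2 / (1 - (1-c n)^2)
          = (p n / c n) * (p n * ((1-s)^2/((1-p n)^2 * (2-c n)))) := by
        intro n
        obtain ⟨h1, h2⟩ := hp n
        obtain ⟨h3, h4⟩ := hc n
        have e1 : (1:ℝ) - p n ≠ 0 := by linarith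
        have e2 : c n ≠ 0 := by linarith
        have e3 : (2:ℝ) - c n ≠ 0 := by linarith
        have e4 : (1:ℝ) - (1-c n)^2 = c n * (2 - c n) := by ring
        rw [e4]
        field_simp
      have hden : Tendsto (fun n => (1-s)^2/((1-p n)^2 * (2-c n))) atTop
          (nhds ((1-s)^2/((1-(0:ℝ))^2 * (2-0)))) := by
        refine tendsto_const_nhds.div ?_ (by norm_num)
        exact (((tendsto_const_nhds.sub hp0).pow 2).mul (tendsto_const_nhds.sub hc0))
      have h6 := hratio.mul (hp0.mul hden)
      have h7 := Tendsto.congr (fun n => (hrw n).symm) h6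
      simpa using h7
    have hAB : Tendsto (fun n => p n * (1-s)/((1-p n)*(c n))
        - (p n * (1-s)/(1-p n))^2 / (1 - (1-c n)^2)) atTop (nhds (β * (1-s))) := by
      have := hA.sub hB
      simpa using this
    have hL : Tendsto (fun n => -Real.log (∑' k, piD n k * s ^ k)) atTop (nhds (β * (1-s))) :=
      tendsto_of_tendsto_of_tendsto_of_le_of_le hAB hA (fun n => (hb n).1) (fun n => (hb n).2)
    have hlog : Tendsto (fun n => Real.log (∑' k, piD n k * s ^ k)) atTop
        (nhds (-(β * (1-s)))) := by
      have := hL.neg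
      simpa using this
    have hfin := (Real.continuous_exp.tendsto _).comp hlog
    refine Tendsto.congr (fun n => ?_) hfin
    exact Real.exp_log (pgf_pos (hpi0 n) (hpi1 n) hs0 hs1.le)
  -- pointwise convergence by strong induction
  intro k
  induction k using Nat.strong_induction_on with
  | _ k ih =>
  show Tendsto (fun n => piD n k) atTop (nhds (poissonPMF β k))
  rw [Metric.tendsto_nhds]
  intro ε hε
  set s := min (1/2 : ℝ) (ε/4) with hsdef
  have hs0 : 0 < s := lt_min (by norm_num) (by positivity)
  have hs1 : s < 1 := lt_of_le_of_lt (min_le_left _ _) (by norm_num)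
  have hsε : s ≤ ε/4 := min_le_right _ _
  have hskpos : 0 < s ^ k := pow_pos hs0 k
  set E : ℝ := Real.exp (-(β * (1 - s))) with hEdef
  set P : ℕ → ℝ := poissonPMF β with hPdef
  have h1 : ∀ᶠ n in atTop, |(∑' j, piD n j * s ^ j) - E| < ε/4 * s^k := by
    have h := hGlim s hs0 hs1
    have h2 := h (Metric.ball_mem_nhds E (by positivity : (0:ℝ) < ε/4 * s^k))
    filter_upwards [h2] with n hn
    rw [Set.mem_preimage, Metric.mem_ball, Real.dist_eq] at hn
    exact hn
  have h2 : ∀ᶠ n in atTop, ∀ j ∈ Finset.range k,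
      |piD n j - P j| < ε/(4*((k:ℝ)+1)) * s^k := by
    rw [eventually_all_finset]
    intro j hj
    have h := ih j (Finset.mem_range.mp hj)
    have hpos : (0:ℝ) < ε/(4*((k:ℝ)+1)) * s^k := by positivity
    have h3 := h (Metric.ball_mem_nhds _ hpos)
    filter_upwards [h3] with n hn
    rw [Set.mem_preimage, Metric.mem_ball, Real.dist_eq] at hn
    exact hn
  filter_upwards [h1, h2] with n hn1 hn2
  rw [Real.dist_eq]
  -- summability facts
  have hq : Summable (piD n) := summable_of_tsum_one (hpi1 n)
  have hqs : Summable (fun j => piD n j * s ^ j) := summable_pgf (hpi0 n) hq hs0.le hs1.le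
  have hPhs : HasSum (fun j => P j * s ^ j) E := poisson_pgf_hasSum β s
  have hP0 : ∀ j, 0 ≤ P j := poissonPMF_nonneg hβ
  have hP1 : HasSum P 1 := poisson_hasSum_one β
  -- split off heads
  have split1 := Summable.sum_add_tsum_nat_add (f := fun j => piD n j * s ^ j) (k+1) hqs
  have split2 := Summable.sum_add_tsum_nat_add (f := fun j => P j * s ^ j) (k+1) hPhs.summable
  rw [hPhs.tsum_eq] at split2
  -- tail bounds
  have tail_bound : ∀ (q : ℕ → ℝ), (∀ j, 0 ≤ q j) → (∑' j, q j) = 1 → Summable q →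
      0 ≤ (∑' j, q (j+(k+1)) * s ^ (j+(k+1)))
        ∧ (∑' j, q (j+(k+1)) * s ^ (j+(k+1))) ≤ s^(k+1) := by
    intro q hq0 hq1 hqsum
    have hqs' : Summable (fun j => q j * s ^ j) := summable_pgf hq0 hqsum hs0.le hs1.le
    have htails : Summable (fun j => q (j+(k+1)) * s ^ (j+(k+1))) :=
      (summable_nat_add_iff (f := fun j => q j * s ^ j) (k+1)).mpr hqs'
    have htailq : Summable (fun j => q (j+(k+1))) :=
      (summable_nat_add_iff (f := q) (k+1)).mpr hqsum
    constructor
    · exact tsum_nonneg fun j => mul_nonneg (hq0 _) (pow_nonneg hs0.le _)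
    · have hb : ∀ j, q (j+(k+1)) * s ^ (j+(k+1)) ≤ q (j+(k+1)) * s ^ (k+1) := fun j =>
        mul_le_mul_of_nonneg_left (pow_le_pow_of_le_one hs0.le hs1.le (by omega)) (hq0 _)
      calc (∑' j, q (j+(k+1)) * s ^ (j+(k+1)))
          ≤ ∑' j, q (j+(k+1)) * s ^ (k+1) :=
            Summable.tsum_le_tsum hb htails (htailq.mul_right _)
        _ = (∑' j, q (j+(k+1))) * s ^ (k+1) := tsum_mul_right
        _ ≤ 1 * s^(k+1) := by
            refine mul_le_mul_of_nonneg_right ?_ (pow_nonneg hs0.le _)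
            have hsplit := Summable.sum_add_tsum_nat_add (f := q) (k+1) hqsum
            rw [hq1] at hsplit
            have hhead : 0 ≤ ∑ j ∈ Finset.range (k+1), q j :=
              Finset.sum_nonneg fun j _ => hq0 j
            linarith
        _ = s^(k+1) := one_mul _
  have hRq := tail_bound (piD n) (hpi0 n) (hpi1 n) hq
  have hRP := tail_bound P hP0 hP1.tsum_eq hP1.summable
  -- key linear identity
  have e1 : (piD n k - P k) * s^k
      = ((∑' j, piD n j * s ^ j) - E)
        - (∑ j ∈ Finset.range k, (piD n j - P j) * s ^ j)
        - ((∑' j, piD n (j+(k+1)) * s ^ (j+(k+1))) - (∑' j, P (j+(k+1)) * s ^ (j+(k+1)))) := by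
    rw [Finset.sum_range_succ] at split1 split2
    have hsub : ∑ j ∈ Finset.range k, (piD n j - P j) * s ^ j
        = ∑ j ∈ Finset.range k, piD n j * s ^ j - ∑ j ∈ Finset.range k, P j * s ^ j := by
      rw [← Finset.sum_sub_distrib]
      exact Finset.sum_congr rfl fun j _ => by ring
    rw [hsub]
    linarith
  -- numeric estimates
  have hSig : |∑ j ∈ Finset.range k, (piD n j - P j) * s ^ j| ≤ ε/4 * s^k := by
    calc |∑ j ∈ Finset.range k, (piD n j - P j) * s ^ j|
        ≤ ∑ j ∈ Finset.range k, |(piD n j - P j) * s ^ j| :=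
          Finset.abs_sum_le_sum_abs _ _
      _ ≤ ∑ _j ∈ Finset.range k, ε/(4*((k:ℝ)+1)) * s^k := by
          refine Finset.sum_le_sum fun j hj => ?_
          rw [abs_mul, abs_of_nonneg (pow_nonneg hs0.le j)]
          calc |piD n j - P j| * s ^ j
              ≤ (ε/(4*((k:ℝ)+1)) * s^k) * 1 := by
                refine mul_le_mul (hn2 j hj).le (pow_le_one₀ hs0.le hs1.le)
                  (pow_nonneg hs0.le j) (by positivity)
            _ = ε/(4*((k:ℝ)+1)) * s^k := mul_one _
      _ = (k:ℝ) * (ε/(4*((k:ℝ)+1)) * s^k) := by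
          rw [Finset.sum_const, Finset.card_range, nsmul_eq_mul]
      _ ≤ ((k:ℝ)+1) * (ε/(4*((k:ℝ)+1)) * s^k) := by
          refine mul_le_mul_of_nonneg_right (by linarith) (by positivity)
      _ = ε/4 * s^k := by
          have hk1 : ((k:ℝ)+1) ≠ 0 := by positivity
          field_simp
  have hskk : s^(k+1) ≤ ε/4 * s^k := by
    rw [pow_succ]
    calc s^k * s ≤ s^k * (ε/4) := mul_le_mul_of_nonneg_left hsε hskpos.le
      _ = ε/4 * s^k := by ring
  have habs := abs_lt.mp hn1
  have habsSig := abs_le.mp hSig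
  have hup : (piD n k - P k) * s^k < (3/4*ε) * s^k := by nlinarith [hRq.1, hRq.2, hRP.1, hRP.2]
  have hdn : (-(3/4*ε)) * s^k < (piD n k - P k) * s^k := by nlinarith [hRq.1, hRq.2, hRP.1, hRP.2]
  have hup' := (mul_lt_mul_iff_of_pos_right hskpos).mp hup
  have hdn' := (mul_lt_mul_iff_of_pos_right hskpos).mp hdn
  rw [abs_lt]
  constructor <;> linarith
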